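/- Let G be an amenable locally compact group, 1 < p < ∞, and let (d_α) be an approximate diagonal for L_1(G) of bound 1, with d_α = Σ_k a_k^{(α)} ⊗ b_k^{(α)}. Define Q : B(L_p(G)) → B(L_p(G)) as a weak limit of T ↦ Σ_k ρ_p(a_k^{(α)}) T ρ_p(b_k^{(α)}). Then for every n, every matrix T = (T_{ij}) ∈ M_n(B(L_p(G))), every (x_j)_{j=1}^n ⊆ L_p(G) and (μ_i)_{i=1}^n ⊆ L_{p'}(G), one has |Σ_{i,j} ⟨μ_i, Q(T_{ij})(x_j)⟩| ≤ ‖T‖_n (Σ_i ‖μ_i‖^{p'})^{1/p'} (Σ_j ‖x_j‖^p)^{1/p}, where ‖T‖_n is the norm of T on ℓ_p^n(L_p(G)); in particular Q is completely contractive in the p-operator space sense. -/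

import Mathlib

open MeasureTheory NormedSpace Filter Topology
open scoped ENNReal

/-- Hölder for finite sums of norms. -/
private lemma holder_sum {q p : ℝ} (hqp : q.HolderConjugate p) {n : ℕ}
    (u v : Fin n → ℝ) (hu : ∀ i, 0 ≤ u i) (hv : ∀ i, 0 ≤ v i) :
    ∑ i, u i * v i ≤ (∑ i, u i ^ q) ^ (1 / q) * (∑ i, v i ^ p) ^ (1 / p) := by
  have := Real.inner_le_Lp_mul_Lq (Finset.univ) u v hqp
  simpa [abs_of_nonneg, hu, hv, fun i => abs_of_nonneg (hu i),
    fun i => abs_of_nonneg (hv i)] using this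

/-- The quasi-expectation `Q` on `B(L^p(G))` built from an approximate diagonal
of bound `1` for `L¹(G)` via the (norm-decreasing) right regular representation
`ρ_p` is `p`-completely contractive: for any matrix `T = (T_{ij})` acting on
`ℓ_p^n(L^p(G))` with norm at most `C`, vectors `(x_j)` and functionals `(m_i)`,
`|Σ_{i,j} ⟨m_i, Q(T_{ij}) x_j⟩| ≤ C (Σ_i ‖m_i‖^{p'})^{1/p'} (Σ_j ‖x_j‖^p)^{1/p}`. -/
theorem stmt_13 (G : Type*) [Group G] [TopologicalSpace G] [IsTopologicalGroup G]
    [LocallyCompactSpace G] [MeasurableSpace G] [BorelSpace G]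
    (μ : Measure G) [μ.IsHaarMeasure]
    (p q : ℝ) (hpq : p.HolderConjugate q) [Fact (1 ≤ ENNReal.ofReal p)]
    -- `ρ_p : L¹(G) → B(L^p(G))` is norm-decreasing
    (ρ : Lp ℂ 1 μ → (Lp ℂ (ENNReal.ofReal p) μ →L[ℂ] Lp ℂ (ENNReal.ofReal p) μ))
    (hρ : ∀ a, ‖ρ a‖ ≤ ‖a‖)
    -- an approximate diagonal for `L¹(G)` of bound `1`
    (ι : Type*) (l : Filter ι) [l.NeBot] (a b : ι → ℕ → Lp ℂ 1 μ)
    (hsum : ∀ α, Summable fun k => ‖a α k‖ * ‖b α k‖)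
    (hbdd : ∀ α, (∑' k, ‖a α k‖ * ‖b α k‖) ≤ 1)
    -- `Q` is a weak limit of `T ↦ Σ_k ρ(a_k^{(α)}) T ρ(b_k^{(α)})`
    (Q : (Lp ℂ (ENNReal.ofReal p) μ →L[ℂ] Lp ℂ (ENNReal.ofReal p) μ) →
         (Lp ℂ (ENNReal.ofReal p) μ →L[ℂ] Lp ℂ (ENNReal.ofReal p) μ))
    (hQ : ∀ (S : Lp ℂ (ENNReal.ofReal p) μ →L[ℂ] Lp ℂ (ENNReal.ofReal p) μ)
        (m : StrongDual ℂ (Lp ℂ (ENNReal.ofReal p) μ)) (x : Lp ℂ (ENNReal.ofReal p) μ),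
      Tendsto (fun α => ∑' k, m (ρ (a α k) (S (ρ (b α k) x)))) l (𝓝 (m (Q S x))))
    (n : ℕ)
    (T : Matrix (Fin n) (Fin n)
      (Lp ℂ (ENNReal.ofReal p) μ →L[ℂ] Lp ℂ (ENNReal.ofReal p) μ))
    (C : ℝ)
    -- `‖T‖_n ≤ C` on `ℓ_p^n(L^p(G))`
    (hT : ∀ ξ : Fin n → Lp ℂ (ENNReal.ofReal p) μ,
      (∑ i, ‖∑ j, T i j (ξ j)‖ ^ p) ^ (1 / p) ≤ C * (∑ j, ‖ξ j‖ ^ p) ^ (1 / p)) :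
    ∀ (x : Fin n → Lp ℂ (ENNReal.ofReal p) μ)
      (m : Fin n → StrongDual ℂ (Lp ℂ (ENNReal.ofReal p) μ)),
      ‖∑ i, ∑ j, m i (Q (T i j) (x j))‖
        ≤ C * (∑ i, ‖m i‖ ^ q) ^ (1 / q) * (∑ j, ‖x j‖ ^ p) ^ (1 / p) := by
  intro x m
  have hp0 : 0 < p := hpq.pos
  have hq0 : 0 < q := hpq.symm.pos
  set Mq : ℝ := (∑ i, ‖m i‖ ^ q) ^ (1 / q) with hMq
  set Xp : ℝ := (∑ j, ‖x j‖ ^ p) ^ (1 / p) with hXp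
  have hMq0 : 0 ≤ Mq :=
    Real.rpow_nonneg (Finset.sum_nonneg fun i _ => Real.rpow_nonneg (norm_nonneg _) _) _
  have hXp0 : 0 ≤ Xp :=
    Real.rpow_nonneg (Finset.sum_nonneg fun j _ => Real.rpow_nonneg (norm_nonneg _) _) _
  by_cases hC : 0 ≤ C
  · -- main case: `C ≥ 0`
    have hK0 : 0 ≤ C * Mq * Xp := mul_nonneg (mul_nonneg hC hMq0) hXp0
    -- the key pointwise estimate
    have key : ∀ (a' b' : Lp ℂ 1 μ),
        ‖∑ i, ∑ j, m i (ρ a' ((T i j) (ρ b' (x j))))‖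
          ≤ (‖a'‖ * ‖b'‖) * (C * Mq * Xp) := by
      intro a' b'
      set y : Fin n → Lp ℂ (ENNReal.ofReal p) μ := fun i => ∑ j, T i j (ρ b' (x j)) with hy
      have h1 : ∀ i, ∑ j, m i (ρ a' ((T i j) (ρ b' (x j)))) = m i (ρ a' (y i)) := by
        intro i; rw [hy]; simp [map_sum]
      have h2 : ‖∑ i, m i (ρ a' (y i))‖ ≤ ∑ i, ‖m i‖ * (‖a'‖ * ‖y i‖) := by
        refine (norm_sum_le _ _).trans (Finset.sum_le_sum fun i _ => ?_)
        calc ‖m i (ρ a' (y i))‖ ≤ ‖m i‖ * ‖ρ a' (y i)‖ := (m i).le_opNorm _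
          _ ≤ ‖m i‖ * (‖a'‖ * ‖y i‖) := by
              refine mul_le_mul_of_nonneg_left ?_ (norm_nonneg _)
              exact ((ρ a').le_opNorm _).trans
                (mul_le_mul_of_nonneg_right (hρ a') (norm_nonneg _))
      have h3 : ∑ i, ‖m i‖ * (‖a'‖ * ‖y i‖) = ‖a'‖ * ∑ i, ‖m i‖ * ‖y i‖ := by
        rw [Finset.mul_sum]; congr 1; ext i; ring
      have h4 : ∑ i, ‖m i‖ * ‖y i‖ ≤ Mq * (∑ i, ‖y i‖ ^ p) ^ (1 / p) :=
        holder_sum hpq.symm _ _ (fun i => norm_nonneg _) (fun i => norm_nonneg _)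
      have h5 : (∑ i, ‖y i‖ ^ p) ^ (1 / p) ≤ C * (∑ j, ‖ρ b' (x j)‖ ^ p) ^ (1 / p) :=
        hT (fun j => ρ b' (x j))
      have h6 : (∑ j, ‖ρ b' (x j)‖ ^ p) ^ (1 / p) ≤ ‖b'‖ * Xp := by
        have hle : ∑ j, ‖ρ b' (x j)‖ ^ p ≤ ‖b'‖ ^ p * ∑ j, ‖x j‖ ^ p := by
          rw [Finset.mul_sum]
          refine Finset.sum_le_sum fun j _ => ?_
          rw [← Real.mul_rpow (norm_nonneg _) (norm_nonneg _)]
          refine Real.rpow_le_rpow (norm_nonneg _) ?_ hp0.le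
          exact ((ρ b').le_opNorm _).trans
            (mul_le_mul_of_nonneg_right (hρ b') (norm_nonneg _))
        calc (∑ j, ‖ρ b' (x j)‖ ^ p) ^ (1 / p)
            ≤ (‖b'‖ ^ p * ∑ j, ‖x j‖ ^ p) ^ (1 / p) := by
              refine Real.rpow_le_rpow ?_ hle (by positivity)
              exact Finset.sum_nonneg fun j _ => Real.rpow_nonneg (norm_nonneg _) _
          _ = ‖b'‖ * Xp := by
              rw [Real.mul_rpow (Real.rpow_nonneg (norm_nonneg _) _)
                (Finset.sum_nonneg fun j _ => Real.rpow_nonneg (norm_nonneg _) _),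
                ← Real.rpow_mul (norm_nonneg _), mul_one_div_cancel hp0.ne',
                Real.rpow_one]
      calc ‖∑ i, ∑ j, m i (ρ a' ((T i j) (ρ b' (x j))))‖
          = ‖∑ i, m i (ρ a' (y i))‖ := by
            congr 1; exact Finset.sum_congr rfl fun i _ => h1 i
        _ ≤ ∑ i, ‖m i‖ * (‖a'‖ * ‖y i‖) := h2
        _ = ‖a'‖ * ∑ i, ‖m i‖ * ‖y i‖ := h3
        _ ≤ ‖a'‖ * (Mq * (∑ i, ‖y i‖ ^ p) ^ (1 / p)) :=
            mul_le_mul_of_nonneg_left h4 (norm_nonneg _)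
        _ ≤ ‖a'‖ * (Mq * (C * (∑ j, ‖ρ b' (x j)‖ ^ p) ^ (1 / p))) :=
            mul_le_mul_of_nonneg_left
              (mul_le_mul_of_nonneg_left h5 hMq0) (norm_nonneg _)
        _ ≤ ‖a'‖ * (Mq * (C * (‖b'‖ * Xp))) :=
            mul_le_mul_of_nonneg_left
              (mul_le_mul_of_nonneg_left
                (mul_le_mul_of_nonneg_left h6 hC) hMq0) (norm_nonneg _)
        _ = (‖a'‖ * ‖b'‖) * (C * Mq * Xp) := by ring
    -- auxiliary operator estimate
    have hρ' : ∀ (c : Lp ℂ 1 μ) (z : Lp ℂ (ENNReal.ofReal p) μ),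
        ‖ρ c z‖ ≤ ‖c‖ * ‖z‖ := fun c z =>
      ((ρ c).le_opNorm z).trans (mul_le_mul_of_nonneg_right (hρ c) (norm_nonneg _))
    -- summability of each inner series
    have hfs : ∀ (α : ι) (i j : Fin n),
        Summable fun k => m i (ρ (a α k) ((T i j) (ρ (b α k) (x j)))) := by
      intro α i j
      refine Summable.of_norm_bounded ((hsum α).mul_left (‖m i‖ * ‖T i j‖ * ‖x j‖))
        fun k => ?_
      calc ‖m i (ρ (a α k) ((T i j) (ρ (b α k) (x j))))‖
          ≤ ‖m i‖ * ‖ρ (a α k) ((T i j) (ρ (b α k) (x j)))‖ := (m i).le_opNorm _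
        _ ≤ ‖m i‖ * (‖a α k‖ * ‖(T i j) (ρ (b α k) (x j))‖) :=
            mul_le_mul_of_nonneg_left (hρ' _ _) (norm_nonneg _)
        _ ≤ ‖m i‖ * (‖a α k‖ * (‖T i j‖ * ‖ρ (b α k) (x j)‖)) :=
            mul_le_mul_of_nonneg_left
              (mul_le_mul_of_nonneg_left ((T i j).le_opNorm _) (norm_nonneg _))
              (norm_nonneg _)
        _ ≤ ‖m i‖ * (‖a α k‖ * (‖T i j‖ * (‖b α k‖ * ‖x j‖))) :=
            mul_le_mul_of_nonneg_left
              (mul_le_mul_of_nonneg_left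
                (mul_le_mul_of_nonneg_left (hρ' _ _) (norm_nonneg _))
                (norm_nonneg _)) (norm_nonneg _)
        _ = ‖m i‖ * ‖T i j‖ * ‖x j‖ * (‖a α k‖ * ‖b α k‖) := by ring
    -- the weak limit
    have hlim : Tendsto
        (fun α => ∑ i, ∑ j, ∑' k, m i (ρ (a α k) ((T i j) (ρ (b α k) (x j)))))
        l (𝓝 (∑ i, ∑ j, m i (Q (T i j) (x j)))) := by
      refine tendsto_finset_sum _ fun i _ => tendsto_finset_sum _ fun j _ => ?_
      exact hQ (T i j) (m i) (x j)
    refine le_of_tendsto hlim.norm (Eventually.of_forall fun α => ?_)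
    -- exchange sums
    have hswap : (∑ i, ∑ j, ∑' k, m i (ρ (a α k) ((T i j) (ρ (b α k) (x j)))))
        = ∑' k, ∑ i, ∑ j, m i (ρ (a α k) ((T i j) (ρ (b α k) (x j)))) := by
      have h1 : ∀ i : Fin n,
          ∑ j, ∑' k, m i (ρ (a α k) ((T i j) (ρ (b α k) (x j))))
            = ∑' k, ∑ j, m i (ρ (a α k) ((T i j) (ρ (b α k) (x j)))) :=
        fun i => (Summable.tsum_finsetSum fun j _ => hfs α i j).symm
      rw [Finset.sum_congr rfl fun i _ => h1 i]
      exact (Summable.tsum_finsetSum fun i _ => summable_sum fun j _ => hfs α i j).symm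
    rw [hswap]
    have hnorm_s : Summable fun k =>
        ‖∑ i, ∑ j, m i (ρ (a α k) ((T i j) (ρ (b α k) (x j))))‖ :=
      Summable.of_nonneg_of_le (fun k => norm_nonneg _) (fun k => key _ _)
        ((hsum α).mul_right (C * Mq * Xp))
    calc ‖∑' k, ∑ i, ∑ j, m i (ρ (a α k) ((T i j) (ρ (b α k) (x j))))‖
        ≤ ∑' k, ‖∑ i, ∑ j, m i (ρ (a α k) ((T i j) (ρ (b α k) (x j))))‖ :=
          norm_tsum_le_tsum_norm hnorm_s
      _ ≤ ∑' k, (‖a α k‖ * ‖b α k‖) * (C * Mq * Xp) :=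
          Summable.tsum_le_tsum (fun k => key _ _) hnorm_s ((hsum α).mul_right _)
      _ = (∑' k, ‖a α k‖ * ‖b α k‖) * (C * Mq * Xp) := tsum_mul_right
      _ ≤ 1 * (C * Mq * Xp) := mul_le_mul_of_nonneg_right (hbdd α) hK0
      _ = C * Mq * Xp := one_mul _
  · -- degenerate case: `C < 0` forces all `x j = 0`
    have h0 := hT x
    have hL0 : (0:ℝ) ≤ (∑ i, ‖∑ j, T i j (x j)‖ ^ p) ^ (1 / p) :=
      Real.rpow_nonneg (Finset.sum_nonneg fun i _ => Real.rpow_nonneg (norm_nonneg _) _) _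
    have hCX : 0 ≤ C * Xp := le_trans hL0 h0
    have hXp_eq : Xp = 0 := by
      by_contra h
      have hXp_pos : 0 < Xp := lt_of_le_of_ne hXp0 (Ne.symm h)
      nlinarith [not_le.mp hC]
    have hx : ∀ j, x j = 0 := by
      intro j
      have hsum0 : ∑ j, ‖x j‖ ^ p = 0 := by
        by_contra h
        have : 0 < ∑ j, ‖x j‖ ^ p :=
          lt_of_le_of_ne (Finset.sum_nonneg fun j _ => Real.rpow_nonneg (norm_nonneg _) _)
            (Ne.symm h)
        exact h ((Real.rpow_eq_zero (le_of_lt this) (by positivity)).mp hXp_eq ▸ rfl)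
      have := (Finset.sum_eq_zero_iff_of_nonneg
        (fun j _ => Real.rpow_nonneg (norm_nonneg (x j)) p)).mp hsum0 j (Finset.mem_univ j)
      have hxj : ‖x j‖ = 0 := by
        have := (Real.rpow_eq_zero (norm_nonneg _) hp0.ne').mp this
        exact this
      exact norm_eq_zero.mp hxj
    simp only [hXp_eq, mul_zero]
    simp [hx]
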